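/- Let p, q > 1 with 1/p + 1/q = 1, and define h(t,u) = 1/(1-e^{-t}) - e^{-(u+1)pt}/(1-e^{-pt}) - e^{uqt}/(1-e^{-qt}). If u ≥ 0 or u ≤ -1, then for each fixed u, the map t ↦ h(t,u) is strictly decreasing on (0,∞). -/

import Mathlib

open Real Set

lemma aux_sinh {c : ℝ} (hc : 1 < c) {z : ℝ} (hz : 0 < z) :
    c * Real.sinh z < Real.sinh (c * z) := by
  have hmono : StrictMonoOn (fun z : ℝ => Real.sinh (c * z) - c * Real.sinh z) (Ici 0) := by
    apply strictMonoOn_of_deriv_pos (convex_Ici 0)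
    · fun_prop
    · intro x hx
      rw [interior_Ici, mem_Ioi] at hx
      have h1 : HasDerivAt (fun z : ℝ => Real.sinh (c * z) - c * Real.sinh z)
          (Real.cosh (c * x) * c - c * Real.cosh x) x := by
        have hd : HasDerivAt (fun z : ℝ => c * z) c x := by
          simpa using (hasDerivAt_id x).const_mul c
        exact (hd.sinh).sub ((Real.hasDerivAt_sinh x).const_mul c)
      rw [h1.deriv]
      have : Real.cosh x < Real.cosh (c * x) := by
        rw [Real.cosh_lt_cosh, abs_of_pos hx, abs_of_pos (by positivity)]
        nlinarith
      nlinarith [Real.cosh_pos x]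
  have := hmono self_mem_Ici (mem_Ici.2 hz.le) hz
  simpa using this

lemma denom_pos {c t : ℝ} (hc : 0 < c) (ht : 0 < t) : 0 < 1 - exp (-(c*t)) := by
  have : exp (-(c*t)) < 1 := by rw [Real.exp_lt_one_iff]; nlinarith
  linarith

lemma sq_denom_eq (s : ℝ) : (1 - exp (-s))^2 = exp (-s) * (2 * Real.sinh (s/2))^2 := by
  have h1 : exp (-s) = exp (-(s/2)) * exp (-(s/2)) := by
    rw [← Real.exp_add]; ring_nf
  have h2 : exp (s/2) = (exp (-(s/2)))⁻¹ := by
    rw [← Real.exp_neg]; ring_nf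
  rw [Real.sinh_eq, h1, h2]
  have h3 : exp (-(s/2)) ≠ 0 := (Real.exp_pos _).ne'
  field_simp

lemma frac_eq_sinh {s : ℝ} (hs : 0 < s) :
    exp (-s) / (1 - exp (-s))^2 = 1 / (4 * Real.sinh (s/2)^2) := by
  have hsinh : 0 < Real.sinh (s/2) := Real.sinh_pos_iff.2 (by linarith)
  have hd : (0:ℝ) < 1 - exp (-s) := by
    have := denom_pos one_pos hs; simpa using this
  rw [sq_denom_eq s]
  rw [div_eq_div_iff (by positivity) (by positivity)]
  ring

lemma base_ineq {c t : ℝ} (hc : 1 < c) (ht : 0 < t) :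
    c * exp (-(c*t)) / (1 - exp (-(c*t)))^2 < (1/c) * (exp (-t) / (1 - exp (-t))^2) := by
  have h1 : exp (-(c*t)) / (1 - exp (-(c*t)))^2 = 1 / (4 * Real.sinh (c*t/2)^2) :=
    frac_eq_sinh (by nlinarith)
  have h2 : exp (-t) / (1 - exp (-t))^2 = 1 / (4 * Real.sinh (t/2)^2) := frac_eq_sinh ht
  rw [mul_div_assoc, h1, h2]
  have hs : c * Real.sinh (t/2) < Real.sinh (c*t/2) := by
    have := aux_sinh hc (half_pos ht)
    rwa [show c * (t/2) = c*t/2 by ring] at this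
  have hp2 : 0 < Real.sinh (t/2) := Real.sinh_pos_iff.2 (by linarith)
  have hp3 : 0 < Real.sinh (c*t/2) := Real.sinh_pos_iff.2 (by nlinarith)
  rw [mul_one_div, one_div_mul_one_div, div_lt_div_iff₀ (by positivity) (by positivity)]
  nlinarith [mul_pos (sub_pos.2 hs)
    (by positivity : (0:ℝ) < Real.sinh (c*t/2) + c * Real.sinh (t/2))]

lemma chi_le {s u : ℝ} (hs : 0 < s) (hu : 0 ≤ u) :
    exp (-((u+1)*s)) * ((u+1) - u * exp (-s)) ≤ exp (-s) := by
  have b1 : (0:ℝ) ≤ exp (-s) - (1 - s) := by linarith [Real.add_one_le_exp (-s)]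
  have b2 : u*s + 1 ≤ exp (u*s) := Real.add_one_le_exp _
  have h1 : (u+1) - u * exp (-s) ≤ exp (u*s) := by
    nlinarith [mul_nonneg hu b1]
  calc exp (-((u+1)*s)) * ((u+1) - u * exp (-s))
      ≤ exp (-((u+1)*s)) * exp (u*s) := by
        exact mul_le_mul_of_nonneg_left h1 (Real.exp_pos _).le
    _ = exp (-s) := by rw [← Real.exp_add]; congr 1; ring

lemma psi_le {s u : ℝ} (hs : 0 < s) (hu : 0 ≤ u) :
    exp (u*s) * ((u+1) * exp (-s) - u) ≤ exp (-s) := by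
  have hb := one_add_mul_self_le_rpow_one_add (s := exp (-s) - 1)
    (by nlinarith [Real.exp_pos (-s)]) (p := u+1) (by linarith)
  have hr : (1 + (exp (-s) - 1)) ^ (u+1) = exp (-((u+1)*s)) := by
    rw [show 1 + (exp (-s) - 1) = exp (-s) by ring,
      Real.rpow_def_of_pos (Real.exp_pos _), Real.log_exp]
    congr 1; ring
  have h2 : (u+1) * exp (-s) - u ≤ exp (-((u+1)*s)) := by
    rw [← hr]; linarith [hb]
  calc exp (u*s) * ((u+1) * exp (-s) - u)
      ≤ exp (u*s) * exp (-((u+1)*s)) :=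
        mul_le_mul_of_nonneg_left h2 (Real.exp_pos _).le
    _ = exp (-s) := by rw [← Real.exp_add]; congr 1; ring

/-- h(t,u) = 1/(1-e^{-t}) - e^{-(u+1)pt}/(1-e^{-pt}) - e^{uqt}/(1-e^{-qt}) -/
noncomputable def h (p q t u : ℝ) : ℝ :=
  1 / (1 - exp (-t)) - exp (-((u + 1) * p * t)) / (1 - exp (-(p * t)))
    - exp (u * q * t) / (1 - exp (-(q * t)))

lemma hasDerivAt_frac (a c : ℝ) {t : ℝ} (hd : 1 - exp (-(c*t)) ≠ 0) :
    HasDerivAt (fun t : ℝ => exp (a*t) / (1 - exp (-(c*t))))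
      ((exp (a*t) * a * (1 - exp (-(c*t))) - exp (a*t) * (exp (-(c*t)) * c))
        / (1 - exp (-(c*t)))^2) t := by
  have h1 : HasDerivAt (fun t : ℝ => exp (a*t)) (exp (a*t) * a) t := by
    have hl : HasDerivAt (fun t : ℝ => a*t) a t := by
      simpa using (hasDerivAt_id t).const_mul a
    exact hl.exp
  have h2 : HasDerivAt (fun t : ℝ => 1 - exp (-(c*t))) (exp (-(c*t)) * c) t := by
    have hl : HasDerivAt (fun t : ℝ => -(c*t)) (-c) t := by
      exact (((hasDerivAt_id' t).const_mul c).neg).congr_deriv (by ring)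
    have := (hl.exp).const_sub 1
    exact this.congr_deriv (by ring)
  exact h1.div h2 hd

lemma hasDerivAt_one_frac {t : ℝ} (hd : 1 - exp (-t) ≠ 0) :
    HasDerivAt (fun t : ℝ => 1 / (1 - exp (-t)))
      ((0 * (1 - exp (-t)) - 1 * exp (-t)) / (1 - exp (-t))^2) t := by
  have h2 : HasDerivAt (fun t : ℝ => 1 - exp (-t)) (exp (-t)) t := by
    have := ((hasDerivAt_neg t).exp).const_sub 1
    exact this.congr_deriv (by ring)
  exact (hasDerivAt_const t (1:ℝ)).div h2 hd

lemma hasDerivAt_h (p q u : ℝ) (hp : 0 < p) (hq : 0 < q) {t : ℝ} (ht : 0 < t) :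
    HasDerivAt (fun t : ℝ => h p q t u)
      (-(exp (-t) / (1 - exp (-t))^2)
        + p * (exp (-((u+1)*p*t)) * ((u+1) - u * exp (-(p*t)))) / (1 - exp (-(p*t)))^2
        + q * (exp (u*q*t) * ((u+1) * exp (-(q*t)) - u)) / (1 - exp (-(q*t)))^2) t := by
  have hd1 : 1 - exp (-t) ≠ 0 := by
    have := denom_pos one_pos ht; simp only [one_mul] at this; linarith
  have hd2 : 1 - exp (-(p*t)) ≠ 0 := (denom_pos hp ht).ne'
  have hd3 : 1 - exp (-(q*t)) ≠ 0 := (denom_pos hq ht).ne'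
  have t1 := hasDerivAt_one_frac hd1
  have t2 := hasDerivAt_frac (-((u+1)*p)) p hd2
  have t3 := hasDerivAt_frac (u*q) q hd3
  have hcomb := (t1.sub t2).sub t3
  have hfun : (fun t : ℝ => 1 / (1 - exp (-t))
      - exp (-((u+1)*p)*t) / (1 - exp (-(p*t)))
      - exp ((u*q)*t) / (1 - exp (-(q*t)))) = fun t : ℝ => h p q t u := by
    funext x; simp only [h]; ring_nf
  rw [← hfun]
  refine hcomb.congr_deriv ?_
  have e2 : exp (-((u+1)*p)*t) = exp (-((u+1)*p*t)) := by congr 1; ring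
  rw [e2] at *
  field_simp
  ring

lemma main_anti {p q : ℝ} (hp : 1 < p) (hq : 1 < q) (hpq : 1/p + 1/q = 1) {u : ℝ}
    (hu : 0 ≤ u) : StrictAntiOn (fun t : ℝ => h p q t u) (Ioi (0:ℝ)) := by
  have hp0 : 0 < p := by linarith
  have hq0 : 0 < q := by linarith
  apply strictAntiOn_of_deriv_neg (convex_Ioi 0)
  · intro x hx
    exact (hasDerivAt_h p q u hp0 hq0 hx).continuousAt.continuousWithinAt
  · intro x hx
    rw [interior_Ioi] at hx
    rw [(hasDerivAt_h p q u hp0 hq0 hx).deriv]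
    have hD2 : 0 < 1 - exp (-(p*x)) := denom_pos hp0 hx
    have hD3 : 0 < 1 - exp (-(q*x)) := denom_pos hq0 hx
    have c2 : exp (-((u+1)*p*x)) * ((u+1) - u * exp (-(p*x))) ≤ exp (-(p*x)) := by
      have := chi_le (s := p*x) (mul_pos hp0 hx) hu
      rwa [show -((u+1)*(p*x)) = -((u+1)*p*x) by ring] at this
    have c3 : exp (u*q*x) * ((u+1) * exp (-(q*x)) - u) ≤ exp (-(q*x)) := by
      have := psi_le (s := q*x) (mul_pos hq0 hx) hu
      rwa [show u*(q*x) = u*q*x by ring] at this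
    have b2 := base_ineq hp hx
    have b3 := base_ineq hq hx
    have m2 : p * (exp (-((u+1)*p*x)) * ((u+1) - u * exp (-(p*x)))) / (1 - exp (-(p*x)))^2
        ≤ p * exp (-(p*x)) / (1 - exp (-(p*x)))^2 :=
      (div_le_div_iff_of_pos_right (pow_pos hD2 2)).2 (mul_le_mul_of_nonneg_left c2 hp0.le)
    have m3 : q * (exp (u*q*x) * ((u+1) * exp (-(q*x)) - u)) / (1 - exp (-(q*x)))^2
        ≤ q * exp (-(q*x)) / (1 - exp (-(q*x)))^2 :=
      (div_le_div_iff_of_pos_right (pow_pos hD3 2)).2 (mul_le_mul_of_nonneg_left c3 hq0.le)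
    have key : (1/p) * (exp (-x) / (1 - exp (-x))^2) + (1/q) * (exp (-x) / (1 - exp (-x))^2)
        = exp (-x) / (1 - exp (-x))^2 := by
      rw [← add_mul, hpq, one_mul]
    linarith [b2, b3, m2, m3]

theorem h_strictAnti_in_t (p q : ℝ) (hp : 1 < p) (hq : 1 < q) (hpq : 1 / p + 1 / q = 1)
    (u : ℝ) (hu : 0 ≤ u ∨ u ≤ -1) :
    StrictAntiOn (fun t : ℝ => h p q t u) (Ioi (0 : ℝ)) := by
  rcases hu with hu | hu
  · exact main_anti hp hq hpq hu
  · have hsym : (fun t : ℝ => h p q t u) = fun t : ℝ => h q p t (-1-u) := by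
      funext t
      simp only [h]
      have e1 : exp (-(((-1-u)+1)*q*t)) = exp (u*q*t) := by congr 1; ring
      have e2 : exp ((-1-u)*p*t) = exp (-((u+1)*p*t)) := by congr 1; ring
      rw [e1, e2]
      ring
    rw [hsym]
    exact main_anti hq hp (by linarith) (by linarith)
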